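/- If g: ℝ → ℝ is continuously differentiable, satisfies lim_{|s|→∞} g'(s)/(g(s)s) = 0, and there is T > 0 with inf_{s≥T} g(s) > 0 and sup_{s≤−T} g(s) < 0, then lim_{|s|→∞} (log|g(s)|)/s² = 0. -/

import Mathlib

open Real Filter Topology

private lemma aux_atTop (g : ℝ → ℝ) (hg : Differentiable ℝ g)
    (h0 : Tendsto (fun s => deriv g s / (g s * s)) atTop (𝓝 0))
    (T c : ℝ) (hc : 0 < c) (hge : ∀ s ≥ T, c ≤ |g s|) :
    Tendsto (fun s => Real.log |g s| / s ^ 2) atTop (𝓝 0) := by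
  rw [NormedAddCommGroup.tendsto_nhds_zero]
  intro ε hε
  have hε2 : (0:ℝ) < ε / 2 := by positivity
  obtain ⟨R, hR⟩ := eventually_atTop.mp
    (NormedAddCommGroup.tendsto_nhds_zero.mp h0 (ε/2) hε2)
  set a : ℝ := max (max T R) 1 with ha
  have haT : T ≤ a := le_trans (le_max_left _ _) (le_max_left _ _)
  have haR : R ≤ a := le_trans (le_max_right _ _) (le_max_left _ _)
  have ha1 : (1:ℝ) ≤ a := le_max_right _ _
  have hsq : Tendsto (fun s : ℝ => |Real.log (g a)| / s ^ 2) atTop (𝓝 0) :=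
    tendsto_const_nhds.div_atTop (tendsto_pow_atTop two_ne_zero)
  filter_upwards [eventually_ge_atTop a,
    (hsq.eventually (eventually_lt_nhds hε2))] with s hsa hsmall
  -- for all t in [a, s], bound the derivative of log ∘ g
  have hs0 : (0:ℝ) < s := lt_of_lt_of_le one_pos (ha1.trans hsa)
  have key : ∀ t ∈ Set.Icc a s,
      HasDerivWithinAt (fun t => Real.log (g t)) (deriv g t / g t) (Set.Icc a s) t := by
    intro t ht
    have hgt : g t ≠ 0 := by
      have := hge t (haT.trans ht.1)
      intro h; rw [h] at this; simp at this; linarith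
    exact (((hg t).hasDerivAt).log hgt).hasDerivWithinAt
  have bound : ∀ t ∈ Set.Icc a s, ‖deriv g t / g t‖ ≤ ε / 2 * s := by
    intro t ht
    have ht0 : (0:ℝ) < t := lt_of_lt_of_le one_pos (ha1.trans ht.1)
    have heq : deriv g t / g t = deriv g t / (g t * t) * t := by
      rw [div_mul_eq_mul_div, mul_comm (deriv g t) t, mul_comm (g t) t,
        mul_div_mul_left _ _ ht0.ne']
    rw [heq, norm_mul]
    have h1 : ‖deriv g t / (g t * t)‖ ≤ ε / 2 := le_of_lt (hR t (haR.trans ht.1))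
    have h2 : ‖t‖ ≤ s := by rw [Real.norm_eq_abs, abs_of_pos ht0]; exact ht.2
    exact mul_le_mul h1 h2 (norm_nonneg _) hε2.le
  have mvt := Convex.norm_image_sub_le_of_norm_hasDerivWithin_le key bound
    (convex_Icc a s) (Set.left_mem_Icc.2 hsa) (Set.right_mem_Icc.2 hsa)
  -- mvt : ‖log (g s) - log (g a)‖ ≤ (ε/2 * s) * ‖s - a‖
  have hbound : |Real.log (g s)| ≤ |Real.log (g a)| + ε / 2 * s ^ 2 := by
    have h1 : ‖s - a‖ ≤ s := by
      rw [Real.norm_eq_abs, abs_of_nonneg (by linarith)]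
      linarith [le_trans one_pos.le ha1]
    have h2 : ε / 2 * s * ‖s - a‖ ≤ ε / 2 * s ^ 2 := by
      have : ε / 2 * s * ‖s - a‖ ≤ ε / 2 * s * s :=
        mul_le_mul_of_nonneg_left h1 (by positivity)
      nlinarith
    have h3 : |Real.log (g s)| - |Real.log (g a)| ≤ ‖Real.log (g s) - Real.log (g a)‖ := by
      rw [Real.norm_eq_abs]; exact abs_sub_abs_le_abs_sub _ _
    linarith [mvt, h2, h3]
  have hs2 : (0:ℝ) < s ^ 2 := by positivity
  rw [Real.norm_eq_abs, Real.log_abs, abs_div, abs_of_pos hs2]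
  calc |Real.log (g s)| / s ^ 2 ≤ (|Real.log (g a)| + ε / 2 * s ^ 2) / s ^ 2 := by
        gcongr
    _ = |Real.log (g a)| / s ^ 2 + ε / 2 := by
        rw [add_div, mul_div_assoc, div_self hs2.ne', mul_one]
    _ < ε / 2 + ε / 2 := by linarith
    _ = ε := by ring

theorem log_g_over_sq_tendsto_zero (g : ℝ → ℝ) (hg : ContDiff ℝ 1 g)
    (h0 : Tendsto (fun s => deriv g s / (g s * s)) (Filter.cocompact ℝ) (𝓝 0))
    (h1 : ∃ T > (0:ℝ), (∃ c > (0:ℝ), ∀ s ≥ T, c ≤ g s) ∧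
      (∃ c > (0:ℝ), ∀ s ≤ -T, g s ≤ -c)) :
    Tendsto (fun s => Real.log |g s| / s ^ 2) (Filter.cocompact ℝ) (𝓝 0) := by
  obtain ⟨T, hT, ⟨c₁, hc₁, hg₁⟩, ⟨c₂, hc₂, hg₂⟩⟩ := h1
  have hdiff : Differentiable ℝ g := hg.differentiable one_ne_zero
  rw [cocompact_eq_atBot_atTop, tendsto_sup] at h0 ⊢
  constructor
  · -- atBot case via reflection
    have hGdiff : Differentiable ℝ (fun s : ℝ => g (-s)) := hdiff.comp differentiable_neg
    have hG0 : Tendsto (fun s => deriv (fun u : ℝ => g (-u)) s / (g (-s) * s)) atTop (𝓝 0) := by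
      have h := h0.1.comp tendsto_neg_atTop_atBot
      apply h.congr
      intro s
      rw [Function.comp_apply, deriv_comp_neg (f := g), mul_neg, div_neg, neg_div]
    have hGge : ∀ s ≥ T, c₂ ≤ |g (-s)| := by
      intro s hs
      have := hg₂ (-s) (by linarith)
      rw [abs_of_nonpos (by linarith)]; linarith
    have h2 := (aux_atTop (fun s => g (-s)) hGdiff hG0 T c₂ hc₂ hGge).comp
      tendsto_neg_atBot_atTop
    apply h2.congr
    intro s
    simp [Function.comp]
  · exact aux_atTop g hdiff h0.2 T c₁ hc₁ (fun s hs => (hg₁ s hs).trans (le_abs_self _))
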